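/- arXiv:1306.5875 — 2 statements merged into one kernel-verified Lean document; each statement's English description precedes it below -/
import Mathlib

section
/- Let a₁, a₂, a₃, a₄ be pairwise distinct complex numbers, set k² = ((a₄−a₁)(a₃−a₂))/((a₄−a₂)(a₃−a₁)) and k'² = 1 − k². Assume k² ≠ 0. Define A₁ = (a₄ − k'²a₁)/k², A₂ = k²a₁a₄/(k'²a₁ − a₄), A₃ = (k'²a₄ − a₁)/k². Then a₃ = A₁·(a₂ + A₂)/(a₂ + A₃), provided k'²a₁ − a₄ ≠ 0 and a₂ + A₃ ≠ 0. -/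
theorem a3_moebius (a₁ a₂ a₃ a₄ : ℂ)
    (h12 : a₁ ≠ a₂) (h13 : a₁ ≠ a₃) (h14 : a₁ ≠ a₄)
    (h23 : a₂ ≠ a₃) (h24 : a₂ ≠ a₄) (h34 : a₃ ≠ a₄)
    (k2 : ℂ) (hk2 : k2 = ((a₄ - a₁) * (a₃ - a₂)) / ((a₄ - a₂) * (a₃ - a₁)))
    (k2' : ℂ) (hk2' : k2' = 1 - k2) (hk0 : k2 ≠ 0)
    (A₁ A₂ A₃ : ℂ)
    (hA₁ : A₁ = (a₄ - k2' * a₁) / k2)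
    (hA₂ : A₂ = k2 * a₁ * a₄ / (k2' * a₁ - a₄))
    (hA₃ : A₃ = (k2' * a₄ - a₁) / k2)
    (hden1 : k2' * a₁ - a₄ ≠ 0) (hden2 : a₂ + A₃ ≠ 0) :
    a₃ = A₁ * (a₂ + A₂) / (a₂ + A₃) := by
  have hd : (a₄ - a₂) * (a₃ - a₁) ≠ 0 :=
    mul_ne_zero (sub_ne_zero.2 (Ne.symm h24)) (sub_ne_zero.2 (Ne.symm h13))
  have hkey : k2 * ((a₄ - a₂) * (a₃ - a₁)) = (a₄ - a₁) * (a₃ - a₂) := by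
    rw [hk2]; field_simp
  rw [eq_div_iff hden2, hA₁, hA₂, hA₃, hk2'] at *
  field_simp
  linear_combination (a₄ - (1 - k2) * a₁) * hkey
end

section
/- Let a₁, a₄, and k², k'² = 1 − k² be complex numbers with k² ≠ 0 and a₁ ≠ a₄, let s be a complex number, define ã₂ = a₄ − (a₄ − a₁)·s² and ã₃ = A₁·(ã₂ + A₂)/(ã₂ + A₃) where A₁ = (a₄ − k'²a₁)/k², A₂ = k²a₁a₄/(k'²a₁ − a₄), A₃ = (k'²a₄ − a₁)/k². Then, assuming all relevant denominators are nonzero, ((a₄ − a₁)(ã₃ − ã₂))/((a₄ − ã₂)(ã₃ − a₁)) = k² and (a₄ − ã₂)/(a₄ − a₁) = s². -/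
theorem perturbed_tuple_same_modulus (a₁ a₄ k2 k2' s : ℂ)
    (hk2' : k2' = 1 - k2) (hk0 : k2 ≠ 0) (h14 : a₁ ≠ a₄)
    (A₁ A₂ A₃ ta₂ ta₃ : ℂ)
    (hA₁ : A₁ = (a₄ - k2' * a₁) / k2)
    (hA₂ : A₂ = k2 * a₁ * a₄ / (k2' * a₁ - a₄))
    (hA₃ : A₃ = (k2' * a₄ - a₁) / k2)
    (hta₂ : ta₂ = a₄ - (a₄ - a₁) * s ^ 2)
    (hta₃ : ta₃ = A₁ * (ta₂ + A₂) / (ta₂ + A₃))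
    (hden1 : k2' * a₁ - a₄ ≠ 0) (hden2 : ta₂ + A₃ ≠ 0)
    (hden3 : a₄ - ta₂ ≠ 0) (hden4 : ta₃ - a₁ ≠ 0) :
    ((a₄ - a₁) * (ta₃ - ta₂)) / ((a₄ - ta₂) * (ta₃ - a₁)) = k2 ∧
    (a₄ - ta₂) / (a₄ - a₁) = s ^ 2 := by
  have h14' : a₄ - a₁ ≠ 0 := sub_ne_zero.mpr (Ne.symm h14)
  constructor
  · rw [div_eq_iff (mul_ne_zero hden3 hden4)]
    have key : ta₃ * (ta₂ + A₃) = A₁ * (ta₂ + A₂) := by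
      rw [hta₃, div_mul_cancel₀ _ hden2]
    have hd2 : ta₂ * k2 + (k2' * a₄ - a₁) ≠ 0 := by
      intro h; apply hden2
      rw [hA₃]; field_simp; linear_combination h
    subst hk2' hta₂ hA₁ hA₂ hA₃
    field_simp at key
    have hd2' : (a₄ - (a₄ - a₁) * s ^ 2) * k2 + ((1 - k2) * a₄ - a₁) ≠ 0 := hd2
    have hEq : ta₃ = ((a₄ - (1 - k2) * a₁) * ((a₄ - (a₄ - a₁) * s ^ 2) * ((1 - k2) * a₁ - a₄) + k2 * a₁ * a₄)) /
        (((a₄ - (a₄ - a₁) * s ^ 2) * k2 + ((1 - k2) * a₄ - a₁)) * ((1 - k2) * a₁ - a₄)) := by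
      rw [eq_div_iff (mul_ne_zero hd2' hden1)]
      apply mul_right_cancel₀ hk0
      have e : k2 * a₁ * a₄ / ((1 - k2) * a₁ - a₄) * ((1 - k2) * a₁ - a₄) = k2 * a₁ * a₄ :=
        div_mul_cancel₀ _ hden1
      linear_combination k2 * ((1 - k2) * a₁ - a₄) * key + (a₄ - (1 - k2) * a₁) * k2 * e
    rw [hEq]
    clear hEq key hta₃ hden4
    have e2 := mul_inv_cancel₀ (mul_ne_zero hd2' hden1)
    linear_combination ((a₄ - a₁) * (a₄ - (a₄ - a₁) * s ^ 2) - k2 * (a₄ - (a₄ - (a₄ - a₁) * s ^ 2)) * a₁) * e2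
  · rw [hta₂]
    field_simp
    ring
end
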